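/- arXiv:2408.05392 — 11 statements merged into one kernel-verified Lean document; each statement's English description precedes it below -/
import Mathlib

section
/- There is no finite list F of split sets in ℝ³ such that for every positive integer γ, the split set S_γ = {x ∈ ℝ³ : γ < x₁ + γx₂ + (γ+1)x₃ < γ + 1} satisfies S_γ ∩ [0,1]³ ⊆ S ∩ [0,1]³ for some S ∈ F. -/
theorem stmt_4 :
    ¬ ∃ F : Finset ((ℤ × ℤ × ℤ) × ℤ),
      ∀ γ : ℤ, 1 ≤ γ →
        ∃ p ∈ F,
          ∀ x₁ x₂ x₃ : ℝ, 0 ≤ x₁ → x₁ ≤ 1 → 0 ≤ x₂ → x₂ ≤ 1 → 0 ≤ x₃ → x₃ ≤ 1 →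
            (γ : ℝ) < x₁ + γ * x₂ + (γ + 1) * x₃ →
            x₁ + γ * x₂ + (γ + 1) * x₃ < (γ : ℝ) + 1 →
            ((p.2 : ℝ) < p.1.1 * x₁ + p.1.2.1 * x₂ + p.1.2.2 * x₃ ∧
              p.1.1 * x₁ + p.1.2.1 * x₂ + p.1.2.2 * x₃ < (p.2 : ℝ) + 1) := by
  rintro ⟨F, hF⟩
  set N : ℕ := F.sup (fun p => p.2.natAbs) with hN
  set γ : ℤ := 2 * (N : ℤ) + 2 with hγdef
  have hγ1 : 1 ≤ γ := by omega
  obtain ⟨p, hpF, hp⟩ := hF γ hγ1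
  obtain ⟨⟨a, b, c⟩, η⟩ := p
  dsimp only at hp
  have hηN : η.natAbs ≤ N := Finset.le_sup (f := fun p : (ℤ × ℤ × ℤ) × ℤ => p.2.natAbs) hpF
  have hγR : (1:ℝ) ≤ (γ:ℝ) := by exact_mod_cast hγ1
  -- Point Q1 = (1/2, 1, 0)
  have h1 := hp (1/2) 1 0 (by norm_num) (by norm_num) (by norm_num) (by norm_num)
    (by norm_num) (by norm_num) (by push_cast; linarith) (by push_cast; linarith)
  have H1l : 2*η < a + 2*b := by
    have h : 2*(η:ℝ) < (a:ℝ) + 2*b := by linarith [h1.1]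
    exact_mod_cast h
  have H1r : a + 2*b < 2*η + 2 := by
    have h : (a:ℝ) + 2*b < 2*(η:ℝ) + 2 := by linarith [h1.2]
    exact_mod_cast h
  -- Point Q2 = (1/4, 1, 0)
  have h2 := hp (1/4) 1 0 (by norm_num) (by norm_num) (by norm_num) (by norm_num)
    (by norm_num) (by norm_num) (by push_cast; linarith) (by push_cast; linarith)
  have H2l : 4*η < a + 4*b := by
    have h : 4*(η:ℝ) < (a:ℝ) + 4*b := by linarith [h2.1]
    exact_mod_cast h
  have H2r : a + 4*b < 4*η + 4 := by
    have h : (a:ℝ) + 4*b < 4*(η:ℝ) + 4 := by linarith [h2.2]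
    exact_mod_cast h
  -- Point Q3 = (0, 1/2, 1/2)
  have h3 := hp 0 (1/2) (1/2) (by norm_num) (by norm_num) (by norm_num) (by norm_num)
    (by norm_num) (by norm_num) (by push_cast; linarith) (by push_cast; linarith)
  have H3l : 2*η < b + c := by
    have h : 2*(η:ℝ) < (b:ℝ) + c := by linarith [h3.1]
    exact_mod_cast h
  have H3r : b + c < 2*η + 2 := by
    have h : (b:ℝ) + c < 2*(η:ℝ) + 2 := by linarith [h3.2]
    exact_mod_cast h
  -- Point Q4 = (1, 0, (2γ-1)/(2γ+2))
  have hd : (0:ℝ) < 2*(γ:ℝ)+2 := by linarith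
  have hne : (2*(γ:ℝ)+2) ≠ 0 := ne_of_gt hd
  have hvlo : (γ:ℝ) < 1 + (γ:ℝ)*0 + ((γ:ℝ)+1)*((2*(γ:ℝ)-1)/(2*(γ:ℝ)+2)) := by
    have hval : ((γ:ℝ)+1)*((2*(γ:ℝ)-1)/(2*(γ:ℝ)+2)) = (γ:ℝ) - 1/2 := by
      field_simp
    rw [hval]; linarith
  have hvhi : 1 + (γ:ℝ)*0 + ((γ:ℝ)+1)*((2*(γ:ℝ)-1)/(2*(γ:ℝ)+2)) < (γ:ℝ) + 1 := by
    have hval : ((γ:ℝ)+1)*((2*(γ:ℝ)-1)/(2*(γ:ℝ)+2)) = (γ:ℝ) - 1/2 := by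
      field_simp
    rw [hval]; linarith
  have h4 := hp 1 0 ((2*(γ:ℝ)-1)/(2*(γ:ℝ)+2)) (by norm_num) (by norm_num) (by norm_num)
    (by norm_num) (div_nonneg (by linarith) hd.le) ((div_le_one hd).mpr (by linarith))
    hvlo hvhi
  have key : (a:ℝ)*1 + (b:ℝ)*0 + (c:ℝ)*((2*(γ:ℝ)-1)/(2*(γ:ℝ)+2))
      = ((2*(γ:ℝ)+2)*a + c*(2*(γ:ℝ)-1))/(2*(γ:ℝ)+2) := by
    field_simp
    ring
  rw [key] at h4
  have H4l : (2*γ+2)*η < (2*γ+2)*a + c*(2*γ-1) := by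
    have h := (lt_div_iff₀ hd).mp h4.1
    have h' : ((2*γ+2:ℤ):ℝ)*η < ((2*γ+2:ℤ):ℝ)*a + (c:ℝ)*((2*γ-1:ℤ):ℝ) := by
      push_cast; linarith
    exact_mod_cast h'
  have H4r : (2*γ+2)*a + c*(2*γ-1) < (2*γ+2)*(η+1) := by
    have h := (div_lt_iff₀ hd).mp h4.2
    have h' : ((2*γ+2:ℤ):ℝ)*a + (c:ℝ)*((2*γ-1:ℤ):ℝ) < ((2*γ+2:ℤ):ℝ)*((η:ℝ)+1) := by
      push_cast; linarith
    exact_mod_cast h'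
  have hcase : (a = 1 ∧ b = η ∧ c = η + 1) ∨ (a = -1 ∧ b = η + 1 ∧ c = η) := by omega
  rcases hcase with ⟨ha, hb, hc⟩ | ⟨ha, hb, hc⟩
  · rw [ha, hc] at H4r
    have : 2*γ < 3*η + 1 := by linarith [H4r]
    omega
  · rw [ha, hc] at H4l
    have : 3*η < -2*γ - 2 := by linarith [H4l]
    omega
end

section
/- Fix an integer γ ≥ 1 and let S_γ = {x ∈ ℝ³ : γ < x₁ + γx₂ + (γ+1)x₃ < γ + 1}. Suppose π ∈ ℤ³, η ∈ ℤ are such that S_γ ∩ [0,1]³ ⊆ {x : η < πᵀx < η + 1} ∩ [0,1]³, and suppose further that {x ∈ [0,1]³ : πᵀx ≤ η} ⊆ {x ∈ [0,1]³ : x₁ + γx₂ + (γ+1)x₃ ≤ γ} and {x ∈ [0,1]³ : πᵀx ≥ η + 1} ⊆ {x ∈ [0,1]³ : x₁ + γx₂ + (γ+1)x₃ ≥ γ + 1}. Then π₁ = 1, π₂ = η, and π₃ = η + 1. -/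
theorem stmt_5 (γ π₁ π₂ π₃ η : ℤ) (hγ : 1 ≤ γ)
    (hdom : ∀ x₁ x₂ x₃ : ℝ, 0 ≤ x₁ → x₁ ≤ 1 → 0 ≤ x₂ → x₂ ≤ 1 → 0 ≤ x₃ → x₃ ≤ 1 →
      (γ : ℝ) < x₁ + γ * x₂ + (γ + 1) * x₃ →
      x₁ + γ * x₂ + (γ + 1) * x₃ < (γ : ℝ) + 1 →
      ((η : ℝ) < π₁ * x₁ + π₂ * x₂ + π₃ * x₃ ∧
        π₁ * x₁ + π₂ * x₂ + π₃ * x₃ < (η : ℝ) + 1))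
    (hL : ∀ x₁ x₂ x₃ : ℝ, 0 ≤ x₁ → x₁ ≤ 1 → 0 ≤ x₂ → x₂ ≤ 1 → 0 ≤ x₃ → x₃ ≤ 1 →
      π₁ * x₁ + π₂ * x₂ + π₃ * x₃ ≤ (η : ℝ) →
      x₁ + γ * x₂ + (γ + 1) * x₃ ≤ (γ : ℝ))
    (hR : ∀ x₁ x₂ x₃ : ℝ, 0 ≤ x₁ → x₁ ≤ 1 → 0 ≤ x₂ → x₂ ≤ 1 → 0 ≤ x₃ → x₃ ≤ 1 →
      (η : ℝ) + 1 ≤ π₁ * x₁ + π₂ * x₂ + π₃ * x₃ →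
      (γ : ℝ) + 1 ≤ x₁ + γ * x₂ + (γ + 1) * x₃) :
    π₁ = 1 ∧ π₂ = η ∧ π₃ = η + 1 := by
  have hG : (1:ℝ) ≤ (γ:ℝ) := by exact_mod_cast hγ
  have hG1 : (0:ℝ) < (γ:ℝ) + 1 := by linarith
  set a : ℝ := |(π₃:ℝ)| + 1 with ha_def
  have ha : 0 < a := by rw [ha_def]; positivity
  have ha1 : 1 ≤ a := by have := abs_nonneg ((π₃:ℝ)); linarith [ha_def]
  have hpa : (π₃:ℝ) < a := lt_of_le_of_lt (le_abs_self _) (by linarith)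
  set ε : ℝ := 1 / (2 * ((γ:ℝ) + 1) * a) with hε_def
  have hd : 0 < 2 * ((γ:ℝ) + 1) * a := mul_pos (by linarith) ha
  have hε : 0 < ε := by rw [hε_def]; exact one_div_pos.mpr hd
  have hε1 : ε < 1 := by
    rw [hε_def, div_lt_one hd]
    nlinarith [mul_nonneg (show (0:ℝ) ≤ 2*((γ:ℝ)+1)-4 by linarith)
      (show (0:ℝ) ≤ a - 1 by linarith)]
  have hGε : ((γ:ℝ) + 1) * ε < 1 := by
    rw [hε_def, mul_one_div, div_lt_one hd]
    nlinarith [mul_pos hG1 (show (0:ℝ) < 2*a-1 by linarith)]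
  have hπ₃ε : (π₃:ℝ) * ε < 1 := by
    rw [hε_def, mul_one_div, div_lt_one hd]
    nlinarith [mul_pos ha (show (0:ℝ) < 2*((γ:ℝ)+1)-1 by linarith)]
  have hGεpos : 0 < ((γ:ℝ)+1) * ε := mul_pos hG1 hε
  -- π₂ = η
  have h2 : π₂ = η := by
    rcases lt_trichotomy π₂ η with h | h | h
    · exfalso
      have hc : (π₂:ℝ) ≤ (η:ℝ) - 1 := by
        have : π₂ ≤ η - 1 := by omega
        exact_mod_cast this
      have := (hdom 0 1 ε le_rfl zero_le_one zero_le_one le_rfl hε.le hε1.le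
        (by linarith) (by linarith)).1
      linarith
    · exact h
    · exfalso
      have hc : ((η:ℝ) + 1) ≤ (π₂:ℝ) := by exact_mod_cast h
      have := hR 0 1 0 le_rfl zero_le_one zero_le_one le_rfl le_rfl zero_le_one
        (by linarith)
      linarith
  -- π₃ = η + 1
  have h3 : π₃ = η + 1 := by
    rcases lt_trichotomy π₃ (η+1) with h | h | h
    · exfalso
      have hc : (π₃:ℝ) ≤ (η:ℝ) := by exact_mod_cast (by omega : π₃ ≤ η)
      have := hL 0 0 1 le_rfl zero_le_one le_rfl zero_le_one zero_le_one le_rfl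
        (by linarith)
      linarith
    · exact h
    · exfalso
      have hc : (η:ℝ) + 2 ≤ (π₃:ℝ) := by exact_mod_cast (by omega : η + 2 ≤ π₃)
      have := (hdom 0 0 (1-ε) le_rfl zero_le_one le_rfl zero_le_one
        (by linarith) (by linarith) (by nlinarith) (by nlinarith)).2
      nlinarith
  have hπ₃r : (π₃:ℝ) = (η:ℝ) + 1 := by exact_mod_cast h3
  -- η ≤ γ
  have hηγ : η ≤ γ := by
    by_contra hcon
    push_neg at hcon
    have hcγ : (γ:ℝ) + 1 ≤ (η:ℝ) := by exact_mod_cast (by omega : γ + 1 ≤ η)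
    set b : ℝ := |(π₁:ℝ)| + 1 with hb_def
    have hb : 0 < b := by rw [hb_def]; positivity
    have hb1 : 1 ≤ b := by have := abs_nonneg ((π₁:ℝ)); linarith [hb_def]
    have hpb : (π₁:ℝ) < b := lt_of_le_of_lt (le_abs_self _) (by linarith)
    set δ : ℝ := 1 / (2 * ((γ:ℝ)+1) * b) with hδ_def
    have hdb : 0 < 2 * ((γ:ℝ)+1) * b := mul_pos (by linarith) hb
    have hδ : 0 < δ := by rw [hδ_def]; exact one_div_pos.mpr hdb
    have hδ1 : δ < 1 := by
      rw [hδ_def, div_lt_one hdb]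
      nlinarith [mul_nonneg (show (0:ℝ) ≤ 2*((γ:ℝ)+1)-4 by linarith)
        (show (0:ℝ) ≤ b - 1 by linarith)]
    have hπ₁δ : (π₁:ℝ) * δ * ((γ:ℝ)+1) < 1 := by
      have heq : (π₁:ℝ) * δ * ((γ:ℝ)+1) = (π₁:ℝ) / (2*b) := by
        rw [hδ_def]; field_simp
      rw [heq, div_lt_one (by linarith)]
      linarith
    set t : ℝ := (γ:ℝ) / ((γ:ℝ)+1) with ht_def
    have ht : ((γ:ℝ)+1) * t = (γ:ℝ) := by
      rw [ht_def]; field_simp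
    have ht0 : 0 ≤ t := by
      rw [ht_def]; apply div_nonneg <;> linarith
    have ht1 : t ≤ 1 := by rw [ht_def, div_le_one hG1]; linarith
    have hlow := (hdom δ 0 t hδ.le hδ1.le le_rfl zero_le_one ht0 ht1
      (by linarith) (by linarith)).1
    rw [hπ₃r] at hlow
    have h2' := mul_lt_mul_of_pos_right hlow hG1
    have h3' : ((π₁:ℝ)*δ + (π₂:ℝ)*0 + ((η:ℝ)+1)*t) * ((γ:ℝ)+1)
        = (π₁:ℝ)*δ*((γ:ℝ)+1) + ((η:ℝ)+1)*(γ:ℝ) := by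
      linear_combination ((η:ℝ)+1) * ht
    linarith
  have hηr : (η:ℝ) ≤ (γ:ℝ) := by exact_mod_cast hηγ
  -- π₁ ≥ 1
  have h1ge : 1 ≤ π₁ := by
    by_contra hcon
    push_neg at hcon
    have hc : (π₁:ℝ) + (π₂:ℝ) ≤ (η:ℝ) := by
      have : π₁ + π₂ ≤ η := by omega
      exact_mod_cast this
    have := hL 1 1 0 zero_le_one le_rfl zero_le_one le_rfl le_rfl zero_le_one
      (by linarith)
    linarith
  -- π₁ ≤ 1
  have h1le : π₁ ≤ 1 := by
    by_contra hcon
    push_neg at hcon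
    have hc : (2:ℝ) ≤ (π₁:ℝ) := by exact_mod_cast (by omega : (2:ℤ) ≤ π₁)
    set s : ℝ := (2*(γ:ℝ) - 1) / (2*((γ:ℝ)+1)) with hs_def
    have hs : ((γ:ℝ)+1) * s = (γ:ℝ) - 1/2 := by
      rw [hs_def]; field_simp
    have hs0 : 0 ≤ s := by
      rw [hs_def]; apply div_nonneg <;> linarith
    have hs1 : s ≤ 1 := by rw [hs_def, div_le_one (by linarith)]; linarith
    have hup := (hdom 1 0 s zero_le_one le_rfl le_rfl zero_le_one hs0 hs1
      (by linarith) (by linarith)).2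
    rw [hπ₃r] at hup
    have h2' := mul_lt_mul_of_pos_right hup hG1
    have h3' : ((π₁:ℝ)*1 + (π₂:ℝ)*0 + ((η:ℝ)+1)*s) * ((γ:ℝ)+1)
        = (π₁:ℝ)*((γ:ℝ)+1) + ((η:ℝ)+1)*((γ:ℝ) - 1/2) := by
      linear_combination ((η:ℝ)+1) * hs
    nlinarith [h2', h3', mul_nonneg (show (0:ℝ) ≤ (π₁:ℝ) - 2 by linarith) hG1.le]
  exact ⟨le_antisymm h1le h1ge, h2, h3⟩
end

section
/- For k ≥ 3, there does not exist a finite list F of k-sparse split sets in ℝⁿ (n ≥ k) such that every k-sparse split set S(π, η) is dominated by some single member of F, i.e., S(π, η) ∩ [0,1]ⁿ ⊆ S' ∩ [0,1]ⁿ for some S' ∈ F. -/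
lemma aux_sum3 {n : ℕ} (i0 i1 i2 : Fin n) (e01 : i0 ≠ i1) (e02 : i0 ≠ i2) (e12 : i1 ≠ i2)
    (f g : Fin n → ℝ) (hg : ∀ i : Fin n, i ≠ i0 → i ≠ i1 → i ≠ i2 → g i = 0) :
    ∑ i, f i * g i = f i0 * g i0 + f i1 * g i1 + f i2 * g i2 := by
  rw [← Finset.sum_subset (Finset.subset_univ ({i0, i1, i2} : Finset (Fin n)))
      (fun x _ hx => by
        simp only [Finset.mem_insert, Finset.mem_singleton, not_or] at hx
        rw [hg x hx.1 hx.2.1 hx.2.2, mul_zero])]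
  rw [Finset.sum_insert (by simp [e01, e02]), Finset.sum_insert (by simp [e12]),
    Finset.sum_singleton]
  ring

set_option maxHeartbeats 1000000 in
theorem stmt_7 (k n : ℕ) (hk : 3 ≤ k) (hn : k ≤ n) :
    ¬ ∃ F : Finset ((Fin n → ℤ) × ℤ),
      (∀ p ∈ F, (Finset.univ.filter fun i => p.1 i ≠ 0).card ≤ k) ∧
      ∀ (π : Fin n → ℤ) (η : ℤ),
        (Finset.univ.filter fun i => π i ≠ 0).card ≤ k →
        ∃ p ∈ F,
          ∀ x : Fin n → ℝ, (∀ i, 0 ≤ x i ∧ x i ≤ 1) →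
            (η : ℝ) < ∑ i, (π i : ℝ) * x i → (∑ i, (π i : ℝ) * x i) < (η : ℝ) + 1 →
            ((p.2 : ℝ) < ∑ i, (p.1 i : ℝ) * x i ∧
              (∑ i, (p.1 i : ℝ) * x i) < (p.2 : ℝ) + 1) := by
  rintro ⟨F, -, hF⟩
  have h2n : 2 < n := by omega
  set i0 : Fin n := ⟨0, by omega⟩ with hi0def
  set i1 : Fin n := ⟨1, by omega⟩ with hi1def
  set i2 : Fin n := ⟨2, by omega⟩ with hi2def
  have e01 : i0 ≠ i1 := by simp [hi0def, hi1def, Fin.ext_iff]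
  have e02 : i0 ≠ i2 := by simp [hi0def, hi2def, Fin.ext_iff]
  have e12 : i1 ≠ i2 := by simp [hi1def, hi2def, Fin.ext_iff]
  -- the family of splits
  set pv : ℕ → Fin n → ℤ :=
    fun m i => if i = i0 then 1 else if i = i1 then (m : ℤ) + 1 else
      if i = i2 then -((m : ℤ) + 2) else 0 with hpv
  have hsp : ∀ m : ℕ, (Finset.univ.filter fun i => pv m i ≠ 0).card ≤ k := by
    intro m
    have hsub : (Finset.univ.filter fun i => pv m i ≠ 0) ⊆ {i0, i1, i2} := by
      intro i hi
      simp only [Finset.mem_filter, Finset.mem_univ, true_and] at hi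
      simp only [Finset.mem_insert, Finset.mem_singleton]
      by_contra hcon
      push_neg at hcon
      exact hi (by simp [hpv, hcon.1, hcon.2.1, hcon.2.2])
    refine le_trans (Finset.card_le_card hsub) (le_trans ?_ hk)
    refine le_trans (Finset.card_insert_le _ _) ?_
    have := Finset.card_insert_le i1 ({i2} : Finset (Fin n))
    simp only [Finset.card_singleton] at this
    omega
  have H : ∀ m : ℕ, ∃ p, p ∈ F ∧
      ∀ x : Fin n → ℝ, (∀ i, 0 ≤ x i ∧ x i ≤ 1) →
        ((0 : ℤ) : ℝ) < ∑ i, (pv m i : ℝ) * x i → (∑ i, (pv m i : ℝ) * x i) < ((0 : ℤ) : ℝ) + 1 →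
        ((p.2 : ℝ) < ∑ i, (p.1 i : ℝ) * x i ∧
          (∑ i, (p.1 i : ℝ) * x i) < (p.2 : ℝ) + 1) := fun m => hF (pv m) 0 (hsp m)
  choose g hmem hdom using H
  obtain ⟨a, -, b, -, hab, hgab⟩ :=
    Finset.exists_ne_map_eq_of_card_lt_of_maps_to
      (s := Finset.range (F.card + 1)) (t := F) (by simp) (fun m _ => hmem m)
  obtain ⟨A0, B0, C0, E0, hA0, hB0, hC0, hE0⟩ :
      ∃ A0 B0 C0 E0 : ℤ, (g a).1 i0 = A0 ∧ (g a).1 i1 = B0 ∧ (g a).1 i2 = C0 ∧ (g a).2 = E0 :=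
    ⟨_, _, _, _, rfl, rfl, rfl, rfl⟩
  -- key: evaluated domination property
  have key : ∀ m : ℕ, g m = g a → ∀ u v w : ℝ,
      0 ≤ u → u ≤ 1 → 0 ≤ v → v ≤ 1 → 0 ≤ w → w ≤ 1 →
      0 < u + ((m : ℝ) + 1) * v - ((m : ℝ) + 2) * w →
      u + ((m : ℝ) + 1) * v - ((m : ℝ) + 2) * w < 1 →
      ((E0 : ℝ) < (A0 : ℝ) * u + (B0 : ℝ) * v + (C0 : ℝ) * w ∧
        (A0 : ℝ) * u + (B0 : ℝ) * v + (C0 : ℝ) * w < (E0 : ℝ) + 1) := by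
    intro m hgm u v w hu0 hu1 hv0 hv1 hw0 hw1 hval0 hval1
    set x : Fin n → ℝ := fun i => if i = i0 then u else if i = i1 then v else
      if i = i2 then w else 0 with hx
    have hxcube : ∀ i, 0 ≤ x i ∧ x i ≤ 1 := by
      intro i
      simp only [hx]
      split_ifs <;> constructor <;> first | assumption | norm_num
    have hxz : ∀ i : Fin n, i ≠ i0 → i ≠ i1 → i ≠ i2 → x i = 0 := by
      intro i h1 h2 h3; simp [hx, h1, h2, h3]
    have hx0 : x i0 = u := by simp [hx]
    have hx1 : x i1 = v := by simp [hx, e01.symm, e12]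
    have hx2 : x i2 = w := by simp [hx, e02.symm, e12.symm]
    have hsum1 : ∑ i, (pv m i : ℝ) * x i = u + ((m : ℝ) + 1) * v - ((m : ℝ) + 2) * w := by
      rw [aux_sum3 i0 i1 i2 e01 e02 e12 _ _ hxz, hx0, hx1, hx2]
      have p0 : pv m i0 = 1 := by simp [hpv]
      have p1 : pv m i1 = (m : ℤ) + 1 := by simp [hpv, e01.symm]
      have p2 : pv m i2 = -((m : ℤ) + 2) := by simp [hpv, e02.symm, e12.symm]
      rw [p0, p1, p2]
      push_cast
      ring
    have hsum2 : ∑ i, ((g m).1 i : ℝ) * x i = (A0 : ℝ) * u + (B0 : ℝ) * v + (C0 : ℝ) * w := by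
      rw [aux_sum3 i0 i1 i2 e01 e02 e12 _ _ hxz, hx0, hx1, hx2, hgm, hA0, hB0, hC0]
    have hres := hdom m x hxcube (by rw [hsum1]; push_cast; linarith)
      (by rw [hsum1]; push_cast; linarith)
    rw [hsum2, hgm, hE0] at hres
    exact hres
  -- Step 1: E0 ∈ {0, -1}, A0 = 2*E0+1
  have K1 := key a rfl (1/2) 0 0 (by norm_num) (by norm_num) le_rfl zero_le_one le_rfl
    zero_le_one (by norm_num) (by norm_num)
  have K2 := key a rfl (1/4) 0 0 (by norm_num) (by norm_num) le_rfl zero_le_one le_rfl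
    zero_le_one (by norm_num) (by norm_num)
  simp only [mul_zero, add_zero] at K1 K2
  have hEA : (E0 = 0 ∧ A0 = 1) ∨ (E0 = -1 ∧ A0 = -1) := by
    have c1 : 2 * E0 < A0 := by
      have : ((2 * E0 : ℤ) : ℝ) < (A0 : ℝ) := by push_cast; linarith [K1.1]
      exact_mod_cast this
    have c2 : A0 < 2 * E0 + 2 := by
      have : (A0 : ℝ) < ((2 * E0 + 2 : ℤ) : ℝ) := by push_cast; linarith [K1.2]
      exact_mod_cast this
    have c3 : 4 * E0 < A0 := by
      have : ((4 * E0 : ℤ) : ℝ) < (A0 : ℝ) := by push_cast; linarith [K2.1]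
      exact_mod_cast this
    have c4 : A0 < 4 * E0 + 4 := by
      have : (A0 : ℝ) < ((4 * E0 + 4 : ℤ) : ℝ) := by push_cast; linarith [K2.2]
      exact_mod_cast this
    omega
  -- Step 2: for m ∈ {a, b}: B0*(m+2) + C0*(m+1) = 0 (over ℝ)
  have step2 : ∀ m : ℕ, g m = g a →
      (B0 : ℝ) * ((m : ℝ) + 2) + (C0 : ℝ) * ((m : ℝ) + 1) = 0 := by
    intro m hgm
    have hm2 : (0 : ℝ) < (m : ℝ) + 2 := by positivity
    set w : ℝ := ((m : ℝ) + 1) / ((m : ℝ) + 2) with hw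
    have hw0 : 0 ≤ w := by positivity
    have hw1 : w ≤ 1 := by rw [hw, div_le_one hm2]; linarith
    have hvw : ((m : ℝ) + 2) * w = (m : ℝ) + 1 := by rw [hw]; field_simp
    have h2' : ∀ u : ℝ, 0 < u → u < 1 →
        (E0 : ℝ) < (A0 : ℝ) * u + ((B0 : ℝ) + (C0 : ℝ) * w) ∧
          (A0 : ℝ) * u + ((B0 : ℝ) + (C0 : ℝ) * w) < (E0 : ℝ) + 1 := by
      intro u hu0 hu1
      have := key m hgm u 1 w (le_of_lt hu0) (le_of_lt hu1) zero_le_one le_rfl hw0 hw1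
        (by rw [mul_one]; nlinarith [hvw]) (by rw [mul_one]; nlinarith [hvw])
      constructor
      · linarith [this.1]
      · linarith [this.2]
    set θ : ℝ := (B0 : ℝ) + (C0 : ℝ) * w with hθ
    have hθ0 : θ = 0 := by
      have Kh := h2' (1/2) (by norm_num) (by norm_num)
      rcases hEA with ⟨he, ha'⟩ | ⟨he, ha'⟩ <;>
        simp only [he, ha', Int.cast_zero, Int.cast_one, Int.cast_neg] at Kh h2'
      · rcases lt_trichotomy θ 0 with hlt | heq | hgt
        · have hb : -(1/2 : ℝ) < θ := by linarith [Kh.1]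
          have := h2' (-θ) (by linarith) (by linarith)
          linarith [this.1]
        · exact heq
        · have hb : θ < (1/2 : ℝ) := by linarith [Kh.2]
          have := h2' (1 - θ) (by linarith) (by linarith)
          linarith [this.2]
      · rcases lt_trichotomy θ 0 with hlt | heq | hgt
        · have hb : -(1/2 : ℝ) < θ := by linarith [Kh.1]
          have := h2' (1 + θ) (by linarith) (by linarith)
          linarith [this.1]
        · exact heq
        · have hb : θ < (1/2 : ℝ) := by linarith [Kh.2]
          have := h2' θ (by linarith) (by linarith)
          linarith [this.2]
    calc (B0 : ℝ) * ((m : ℝ) + 2) + (C0 : ℝ) * ((m : ℝ) + 1)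
        = θ * ((m : ℝ) + 2) := by rw [hθ]; rw [← hvw]; ring
      _ = 0 := by rw [hθ0, zero_mul]
  -- Step 3: B0 = 0 (over ℝ)
  have hta := step2 a rfl
  have htb := step2 b hgab.symm
  have hBC : ((B0 : ℝ) + (C0 : ℝ)) * ((a : ℝ) - (b : ℝ)) = 0 := by linear_combination hta - htb
  have habR : (a : ℝ) ≠ (b : ℝ) := by exact_mod_cast hab
  have hBC0 : (B0 : ℝ) + (C0 : ℝ) = 0 := by
    rcases mul_eq_zero.mp hBC with h | h
    · exact h
    · exact absurd (sub_eq_zero.mp h) habR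
  have hBr : (B0 : ℝ) = 0 := by
    have hC : (C0 : ℝ) = -(B0 : ℝ) := by linarith
    rw [hC] at hta
    have hb' : (B0 : ℝ) = (B0 : ℝ) * ((a : ℝ) + 2) + -(B0 : ℝ) * ((a : ℝ) + 1) := by ring
    rw [hb', hta]
  -- Step 4: final contradiction
  have ha1 : (0 : ℝ) < (a : ℝ) + 1 := by positivity
  have hval : (0 : ℝ) + ((a : ℝ) + 1) * (1 / (2 * ((a : ℝ) + 1))) - ((a : ℝ) + 2) * 0
      = 1 / 2 := by field_simp; ring
  have hb1 : (1 : ℝ) / (2 * ((a : ℝ) + 1)) ≤ 1 := by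
    rw [div_le_one (by positivity)]; linarith
  have K4 := key a rfl 0 (1 / (2 * ((a : ℝ) + 1))) 0 le_rfl zero_le_one (by positivity) hb1
    le_rfl zero_le_one (by rw [hval]; norm_num) (by rw [hval]; norm_num)
  have hzero : (A0 : ℝ) * 0 + (B0 : ℝ) * (1 / (2 * ((a : ℝ) + 1))) + (C0 : ℝ) * 0 = 0 := by
    rw [hBr]; ring
  rw [hzero] at K4
  have hE1 : E0 < 0 := by exact_mod_cast K4.1
  have hE2 : (0 : ℤ) < E0 + 1 := by exact_mod_cast K4.2
  omega
end

section
/- Let F be any finite list of 2k-sparse split sets in ℝ^{2k} (k ≥ 2). Then there exists a positive integer θ such that no union of fewer than k split sets from F dominates the split set S^θ = {(x,y) ∈ ℝᵏ × ℝᵏ : Σᵢ θⁱ < Σᵢ θⁱ(xᵢ + yᵢ) < 1 + Σᵢ θⁱ} (sums over i = 1,…,k), i.e., (⋃ of any fewer than k members of F) ∩ [0,1]^{2k} does not contain S^θ ∩ [0,1]^{2k}. -/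
theorem stmt_8 (k : ℕ) (hk : 2 ≤ k)
    (F : Finset ((Fin k ⊕ Fin k → ℤ) × ℤ)) :
    ∃ θ : ℕ, 1 ≤ θ ∧
      ∀ G ⊆ F, G.card < k →
        ¬ (∀ z : Fin k ⊕ Fin k → ℝ, (∀ i, 0 ≤ z i ∧ z i ≤ 1) →
            ((∑ i : Fin k, (θ : ℝ) ^ (i.1 + 1)) <
              ∑ i : Fin k, (θ : ℝ) ^ (i.1 + 1) * (z (Sum.inl i) + z (Sum.inr i))) →
            ((∑ i : Fin k, (θ : ℝ) ^ (i.1 + 1) * (z (Sum.inl i) + z (Sum.inr i))) <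
              1 + ∑ i : Fin k, (θ : ℝ) ^ (i.1 + 1)) →
            ∃ p ∈ G,
              ((p.2 : ℝ) < ∑ i, (p.1 i : ℝ) * z i ∧
                (∑ i, (p.1 i : ℝ) * z i) < (p.2 : ℝ) + 1)) := by
  classical
  -- Step 1: for every small G there is a nonzero vector orthogonal to all "inr-parts"
  have existsV : ∀ G : Finset ((Fin k ⊕ Fin k → ℤ) × ℤ), G.card < k →
      ∃ v : Fin k → ℝ, v ≠ 0 ∧ ∀ p ∈ G, ∑ i, ((p.1 (Sum.inr i) : ℝ)) * v i = 0 := by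
    intro G hG
    set f : (Fin k → ℝ) →ₗ[ℝ] (↥G → ℝ) :=
      LinearMap.pi (fun p => ∑ i, ((p : (Fin k ⊕ Fin k → ℤ) × ℤ).1 (Sum.inr i) : ℝ) •
        LinearMap.proj i) with hf
    have hninj : ¬ Function.Injective f := by
      intro hinj
      have h := LinearMap.finrank_le_finrank_of_injective hinj
      rw [Module.finrank_fintype_fun_eq_card, Module.finrank_fintype_fun_eq_card,
        Fintype.card_fin, Fintype.card_coe] at h
      omega
    rw [Function.not_injective_iff] at hninj
    obtain ⟨a, b, hab, hne⟩ := hninj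
    refine ⟨a - b, sub_ne_zero.mpr hne, ?_⟩
    intro p hp
    have h0 : f (a - b) ⟨p, hp⟩ = 0 := by rw [map_sub]; simp [hab]
    rw [hf] at h0
    simp only [LinearMap.pi_apply, LinearMap.sum_apply, LinearMap.smul_apply,
      LinearMap.proj_apply, smul_eq_mul] at h0
    simpa using h0
  -- choose the vectors
  let vfun : Finset ((Fin k ⊕ Fin k → ℤ) × ℤ) → (Fin k → ℝ) := fun G =>
    if h : G.card < k then (existsV G h).choose else (fun _ => 1)
  have vne : ∀ G, vfun G ≠ 0 := by
    intro G
    simp only [vfun]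
    split
    · exact (existsV G ‹_›).choose_spec.1
    · intro h0
      have : (1 : ℝ) = 0 := congrFun h0 ⟨0, by omega⟩
      norm_num at this
  have vorth : ∀ G (h : G.card < k), ∀ p ∈ G,
      ∑ i, ((p.1 (Sum.inr i) : ℝ)) * vfun G i = 0 := by
    intro G h p hp
    simp only [vfun, dif_pos h]
    exact (existsV G h).choose_spec.2 p hp
  -- Step 2: nonzero polynomials
  let P : Finset ((Fin k ⊕ Fin k → ℤ) × ℤ) → Polynomial ℝ := fun G =>
    ∑ i : Fin k, Polynomial.C (vfun G i) * Polynomial.X ^ (i.1 + 1)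
  have hPne : ∀ G, P G ≠ 0 := by
    intro G
    obtain ⟨j, hj⟩ := Function.ne_iff.mp (vne G)
    intro h0
    apply hj
    have hc := congrArg (fun q : Polynomial ℝ => q.coeff (j.1 + 1)) h0
    simp only [P, Polynomial.finset_sum_coeff, Polynomial.coeff_C_mul,
      Polynomial.coeff_X_pow, Polynomial.coeff_zero] at hc
    rw [Finset.sum_eq_single j] at hc
    · simpa using hc
    · intro i _ hij
      have hne : i.1 + 1 ≠ j.1 + 1 := by
        intro h; exact hij (Fin.ext (by omega))
      simp [Ne.symm hne]
      intro h; exact absurd (by omega) hne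
    · simp
  -- Step 3: choose θ avoiding all roots
  have hfin : ({θ : ℕ | ∃ G ∈ F.powerset, (P G).eval (θ:ℝ) = 0} ∪ {0}).Finite := by
    apply Set.Finite.union _ (Set.finite_singleton 0)
    have hsub : {θ : ℕ | ∃ G ∈ F.powerset, (P G).eval (θ:ℝ) = 0} ⊆
        ⋃ G ∈ (F.powerset : Set _), ((fun n : ℕ => (n:ℝ)) ⁻¹' {x | (P G).IsRoot x}) := by
      intro θ hθ
      obtain ⟨G, hG1, hG2⟩ := hθ
      exact Set.mem_biUnion (by simpa using hG1) hG2
    apply Set.Finite.subset _ hsub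
    apply Set.Finite.biUnion (F.powerset.finite_toSet)
    intro G _
    exact (Polynomial.finite_setOf_isRoot (hPne G)).preimage (Nat.cast_injective.injOn)
  obtain ⟨θ, hθ⟩ := hfin.infinite_compl.nonempty
  simp only [Set.mem_compl_iff, Set.mem_union, Set.mem_setOf_eq, Set.mem_singleton_iff,
    not_or] at hθ
  push_neg at hθ
  refine ⟨θ, by omega, ?_⟩
  intro G hGF hGk H
  -- Step 4: the main argument
  have horth := vorth G hGk
  have hPv : (∑ i : Fin k, vfun G i * (θ:ℝ) ^ (i.1 + 1)) ≠ 0 := by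
    have := hθ.1 G (Finset.mem_powerset.mpr hGF)
    simpa [P, Polynomial.eval_finset_sum] using this
  set v : Fin k → ℝ := vfun G with hv
  set w : Fin k → ℝ := if 0 < ∑ i : Fin k, v i * (θ:ℝ) ^ (i.1 + 1) then v else -v with hw
  have hSw : 0 < ∑ i : Fin k, w i * (θ:ℝ) ^ (i.1 + 1) := by
    rw [hw]
    split
    · assumption
    · have hlt : ∑ i : Fin k, v i * (θ:ℝ) ^ (i.1 + 1) < 0 := by
        rcases lt_or_eq_of_le (not_lt.mp ‹_›) with h | h
        · exact h
        · exact absurd h hPv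
      simp only [Pi.neg_apply, neg_mul]
      rw [Finset.sum_neg_distrib]
      linarith
  have horthw : ∀ p ∈ G, ∑ i, ((p.1 (Sum.inr i) : ℝ)) * w i = 0 := by
    intro p hp
    rw [hw]
    split
    · exact horth p hp
    · simp only [Pi.neg_apply, mul_neg]
      rw [Finset.sum_neg_distrib, horth p hp, neg_zero]
  set Sw : ℝ := ∑ i : Fin k, w i * (θ:ℝ) ^ (i.1 + 1) with hSwdef
  set Aw : ℝ := ∑ i : Fin k, |w i| with hAw
  have hAw0 : 0 ≤ Aw := Finset.sum_nonneg (fun i _ => abs_nonneg _)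
  set t : ℝ := min (1/(2*Sw)) (1/(1+Aw)) with ht
  have ht0 : 0 < t := lt_min (by positivity) (by positivity)
  set d : Fin k → ℝ := fun i => t * w i with hd
  have hd1 : ∀ i, |d i| ≤ 1 := by
    intro i
    rw [hd]
    have h1 : |t * w i| = t * |w i| := by rw [abs_mul, abs_of_pos ht0]
    rw [h1]
    have h2 : |w i| ≤ 1 + Aw := by
      have := Finset.single_le_sum (f := fun i => |w i|) (fun i _ => abs_nonneg _)
        (Finset.mem_univ i)
      rw [← hAw] at this
      linarith
    calc t * |w i| ≤ (1/(1+Aw)) * (1+Aw) :=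
          mul_le_mul (min_le_right _ _) h2 (abs_nonneg _) (by positivity)
      _ = 1 := by field_simp
  have hdsum : ∑ i : Fin k, (θ:ℝ) ^ (i.1 + 1) * d i = t * Sw := by
    rw [hSwdef, Finset.mul_sum]
    exact Finset.sum_congr rfl (fun i _ => by rw [hd]; ring)
  have htSw0 : 0 < t * Sw := mul_pos ht0 hSw
  have htSw1 : t * Sw ≤ 1/2 := by
    calc t * Sw ≤ (1/(2*Sw)) * Sw :=
          mul_le_mul_of_nonneg_right (min_le_left _ _) hSw.le
      _ = 1/2 := by field_simp
  set z : Fin k ⊕ Fin k → ℝ :=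
    Sum.elim (fun i => if 0 ≤ d i then (1:ℝ) else 0)
      (fun i => (if 0 ≤ d i then 0 else 1) + d i) with hz
  have hzb : ∀ i, 0 ≤ z i ∧ z i ≤ 1 := by
    intro i
    rcases i with i | i <;> rw [hz] <;> simp only [Sum.elim_inl, Sum.elim_inr] <;>
      rcases abs_le.mp (hd1 i) with ⟨hl, hu⟩ <;> split_ifs with h <;>
      constructor <;> linarith
  have hzsum : ∀ i : Fin k, z (Sum.inl i) + z (Sum.inr i) = 1 + d i := by
    intro i
    rw [hz]
    simp only [Sum.elim_inl, Sum.elim_inr]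
    split_ifs <;> ring
  have hmid : ∑ i : Fin k, (θ : ℝ) ^ (i.1 + 1) * (z (Sum.inl i) + z (Sum.inr i)) =
      (∑ i : Fin k, (θ : ℝ) ^ (i.1 + 1)) + t * Sw := by
    rw [← hdsum, ← Finset.sum_add_distrib]
    exact Finset.sum_congr rfl (fun i _ => by rw [hzsum i]; ring)
  obtain ⟨p, hpG, h1, h2⟩ := H z hzb (by rw [hmid]; linarith) (by rw [hmid]; linarith)
  -- the split value is an exact integer
  have hbd : ∑ i : Fin k, ((p.1 (Sum.inr i) : ℝ)) * d i = 0 := by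
    have : ∑ i : Fin k, ((p.1 (Sum.inr i) : ℝ)) * d i
        = t * ∑ i, ((p.1 (Sum.inr i) : ℝ)) * w i := by
      rw [Finset.mul_sum]
      exact Finset.sum_congr rfl (fun i _ => by rw [hd]; ring)
    rw [this, horthw p hpG, mul_zero]
  set N : ℤ := (∑ i : Fin k, p.1 (Sum.inl i) * (if 0 ≤ d i then 1 else 0)) +
    (∑ i : Fin k, p.1 (Sum.inr i) * (if 0 ≤ d i then 0 else 1)) with hN
  have key : ∑ i, (p.1 i : ℝ) * z i = (N : ℝ) := by
    rw [Fintype.sum_sum_type]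
    have hinl : ∑ i : Fin k, (p.1 (Sum.inl i) : ℝ) * z (Sum.inl i) =
        ((∑ i : Fin k, p.1 (Sum.inl i) * (if 0 ≤ d i then 1 else 0) : ℤ) : ℝ) := by
      push_cast
      refine Finset.sum_congr rfl (fun i _ => ?_)
      rw [hz]
      simp only [Sum.elim_inl]
    have hinr : ∑ i : Fin k, (p.1 (Sum.inr i) : ℝ) * z (Sum.inr i) =
        ((∑ i : Fin k, p.1 (Sum.inr i) * (if 0 ≤ d i then 0 else 1) : ℤ) : ℝ) := by
      have : ∑ i : Fin k, (p.1 (Sum.inr i) : ℝ) * z (Sum.inr i) =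
          (∑ i : Fin k, (p.1 (Sum.inr i) : ℝ) * (if 0 ≤ d i then 0 else 1)) +
          ∑ i : Fin k, ((p.1 (Sum.inr i) : ℝ)) * d i := by
        rw [← Finset.sum_add_distrib]
        refine Finset.sum_congr rfl (fun i _ => ?_)
        rw [hz]
        simp only [Sum.elim_inr]
        ring
      rw [this, hbd, add_zero]
      push_cast
      rfl

    rw [hinl, hinr, hN]
    push_cast
    ring
  rw [key] at h1 h2
  have h1' : p.2 < N := by exact_mod_cast h1
  have h2' : N < p.2 + 1 := by exact_mod_cast h2
  omega
end

section
/- Let S ⊆ ℝⁿ be a split set and A⁽¹⁾,…,A⁽ᵖ⁾ ⊆ ℝⁿ be split sets. Write A⁽ⁱ⁾₀ = {x : πⁱᵀx ≤ ηⁱ}, A⁽ⁱ⁾₁ = {x : πⁱᵀx ≥ ηⁱ + 1}, and for u ∈ {0,1}ᵖ set A_u = ⋂ᵢ A⁽ⁱ⁾_{uᵢ}. Then S ∩ [0,1]ⁿ ⊆ (⋃ᵢ A⁽ⁱ⁾) ∩ [0,1]ⁿ if and only if for every u ∈ {0,1}ᵖ, either A_u ∩ [0,1]ⁿ ⊆ {x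 : πᵀx ≤ η} or A_u ∩ [0,1]ⁿ ⊆ {x : πᵀx ≥ η + 1}, where S = {x : η < πᵀx < η + 1}. -/
private lemma sum_convex_aux (n : ℕ) (c : Fin n → ℝ) (x y : Fin n → ℝ) (t : ℝ) :
    ∑ i, c i * (t * x i + (1 - t) * y i)
      = t * ∑ i, c i * x i + (1 - t) * ∑ i, c i * y i := by
  rw [Finset.mul_sum, Finset.mul_sum, ← Finset.sum_add_distrib]
  exact Finset.sum_congr rfl (fun i _ => by ring)

theorem stmt_11 (n p : ℕ) (π : Fin n → ℤ) (η : ℤ)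
    (πs : Fin p → Fin n → ℤ) (ηs : Fin p → ℤ) :
    (∀ x : Fin n → ℝ, (∀ i, 0 ≤ x i ∧ x i ≤ 1) →
        (η : ℝ) < ∑ i, (π i : ℝ) * x i → (∑ i, (π i : ℝ) * x i) < (η : ℝ) + 1 →
        ∃ i : Fin p, (ηs i : ℝ) < ∑ j, (πs i j : ℝ) * x j ∧
          (∑ j, (πs i j : ℝ) * x j) < (ηs i : ℝ) + 1) ↔
    (∀ u : Fin p → Bool,
      (∀ x : Fin n → ℝ, (∀ i, 0 ≤ x i ∧ x i ≤ 1) →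
        (∀ i : Fin p, if u i then (ηs i : ℝ) + 1 ≤ ∑ j, (πs i j : ℝ) * x j
          else (∑ j, (πs i j : ℝ) * x j) ≤ (ηs i : ℝ)) →
        (∑ i, (π i : ℝ) * x i) ≤ (η : ℝ)) ∨
      (∀ x : Fin n → ℝ, (∀ i, 0 ≤ x i ∧ x i ≤ 1) →
        (∀ i : Fin p, if u i then (ηs i : ℝ) + 1 ≤ ∑ j, (πs i j : ℝ) * x j
          else (∑ j, (πs i j : ℝ) * x j) ≤ (ηs i : ℝ)) →
        (η : ℝ) + 1 ≤ ∑ i, (π i : ℝ) * x i)) := by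
  constructor
  · intro h u
    by_contra hc
    push_neg at hc
    obtain ⟨⟨x, hxbox, hxA, hxgt⟩, ⟨y, hybox, hyA, hylt⟩⟩ := hc
    -- hxgt : η < f x, hylt : f y < η + 1
    by_cases hx1 : (∑ i, (π i : ℝ) * x i) < (η : ℝ) + 1
    · obtain ⟨i, hi1, hi2⟩ := h x hxbox hxgt hx1
      have := hxA i
      by_cases hu : u i <;> simp [hu] at this <;> linarith
    · push_neg at hx1
      by_cases hy0 : (η : ℝ) < ∑ i, (π i : ℝ) * y i
      · obtain ⟨i, hi1, hi2⟩ := h y hybox hy0 hylt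
        have := hyA i
        by_cases hu : u i <;> simp [hu] at this <;> linarith
      · push_neg at hy0
        set fx := ∑ i, (π i : ℝ) * x i
        set fy := ∑ i, (π i : ℝ) * y i
        have hd : (0:ℝ) < fx - fy := by linarith
        set t : ℝ := ((η : ℝ) + 1/2 - fy) / (fx - fy) with ht
        have ht0 : 0 ≤ t := by
          apply div_nonneg _ hd.le; linarith
        have ht1 : t ≤ 1 := by
          rw [div_le_one hd]; linarith
        set z : Fin n → ℝ := fun j => t * x j + (1 - t) * y j with hz
        have hzbox : ∀ i, 0 ≤ z i ∧ z i ≤ 1 := by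
          intro i
          obtain ⟨h1, h2⟩ := hxbox i
          obtain ⟨h3, h4⟩ := hybox i
          constructor
          · have := mul_nonneg ht0 h1
            have := mul_nonneg (by linarith : (0:ℝ) ≤ 1 - t) h3
            simp only [hz]; linarith
          · have := mul_le_mul_of_nonneg_left h2 ht0
            have := mul_le_mul_of_nonneg_left h4 (by linarith : (0:ℝ) ≤ 1 - t)
            simp only [hz]; linarith
        have hfz : (∑ i, (π i : ℝ) * z i) = (η : ℝ) + 1/2 := by
          simp only [hz]
          rw [sum_convex_aux]
          have : t * (fx - fy) = (η : ℝ) + 1/2 - fy := by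
            rw [ht]; field_simp
          show t * fx + (1 - t) * fy = (η : ℝ) + 1/2
          nlinarith [this]
        obtain ⟨i, hi1, hi2⟩ := h z hzbox (by rw [hfz]; linarith) (by rw [hfz]; linarith)
        have hxi := hxA i
        have hyi := hyA i
        have hconv : (∑ j, (πs i j : ℝ) * z j)
            = t * (∑ j, (πs i j : ℝ) * x j) + (1 - t) * (∑ j, (πs i j : ℝ) * y j) := by
          simp only [hz]; exact sum_convex_aux n _ x y t
        by_cases hu : u i <;> simp [hu] at hxi hyi <;> rw [hconv] at hi1 hi2 <;>
          nlinarith [hxi, hyi, ht0, ht1]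
  · intro h x hbox h1 h2
    by_contra hc
    push_neg at hc
    set u : Fin p → Bool :=
      fun i => decide ((ηs i : ℝ) + 1 ≤ ∑ j, (πs i j : ℝ) * x j) with hu
    have hA : ∀ i : Fin p, if u i then (ηs i : ℝ) + 1 ≤ ∑ j, (πs i j : ℝ) * x j
        else (∑ j, (πs i j : ℝ) * x j) ≤ (ηs i : ℝ) := by
      intro i
      by_cases hi : (ηs i : ℝ) + 1 ≤ ∑ j, (πs i j : ℝ) * x j
      · simp [hu, hi]
      · have : (∑ j, (πs i j : ℝ) * x j) ≤ (ηs i : ℝ) :=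
          le_of_not_gt fun h' => hi (hc i h')
        simp [hu, hi, this]
    rcases h u with hL | hR
    · exact absurd (hL x hbox hA) (not_le.mpr h1)
    · exact absurd (hR x hbox hA) (not_le.mpr h2)
end

section
/- Let k ≥ 1 and let F₁ be the family of the k split sets {x ∈ ℝᵏ : 0 < xᵢ < 1}, i = 1,…,k. Then dominating the split set T = {x ∈ ℝᵏ : k − 1 < Σᵢ xᵢ < k} requires all k split sets of F₁: the union of any k − 1 of them intersected with [0,1]ᵏ does not contain T ∩ [0,1]ᵏ, while the union of all k does. -/
theorem stmt_12 (k : ℕ) (hk : 1 ≤ k) :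
    (∀ G : Finset (Fin k), G.card < k →
      ¬ (∀ x : Fin k → ℝ, (∀ i, 0 ≤ x i ∧ x i ≤ 1) →
          (k : ℝ) - 1 < ∑ i, x i → (∑ i, x i) < (k : ℝ) →
          ∃ i ∈ G, 0 < x i ∧ x i < 1)) ∧
    (∀ x : Fin k → ℝ, (∀ i, 0 ≤ x i ∧ x i ≤ 1) →
      (k : ℝ) - 1 < ∑ i, x i → (∑ i, x i) < (k : ℝ) →
      ∃ i, 0 < x i ∧ x i < 1) := by
  constructor
  · intro G hG hdom
    have hne : G ≠ Finset.univ := by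
      intro h
      rw [h, Finset.card_univ, Fintype.card_fin] at hG
      exact lt_irrefl _ hG
    obtain ⟨j, hj⟩ : ∃ j, j ∉ G := by
      by_contra h
      push_neg at h
      exact hne (Finset.eq_univ_iff_forall.mpr h)
    set x : Fin k → ℝ := fun i => if i = j then 1/2 else 1 with hx
    have hsum : ∑ i, x i = (k : ℝ) - 1/2 := by
      have : ∑ i, x i = ∑ i, ((1 : ℝ) - (if i = j then 1/2 else 0)) := by
        apply Finset.sum_congr rfl
        intro i _
        by_cases h : i = j <;> simp [hx, h] <;> norm_num
      rw [this, Finset.sum_sub_distrib, Finset.sum_ite_eq' Finset.univ j]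
      simp [Fintype.card_fin]
    have hkr : (1 : ℝ) ≤ (k : ℝ) := by exact_mod_cast hk
    obtain ⟨i, hiG, hi0, hi1⟩ := hdom x
      (by
        intro i
        by_cases h : i = j <;> simp [hx, h] <;> norm_num)
      (by rw [hsum]; linarith)
      (by rw [hsum]; linarith)
    have hij : i ≠ j := fun h => hj (h ▸ hiG)
    simp [hx, hij] at hi1
  · intro x hx h1 h2
    by_contra h
    push_neg at h
    have h01 : ∀ i, x i = 0 ∨ x i = 1 := by
      intro i
      rcases lt_or_eq_of_le (hx i).1 with hp | hz
      · exact Or.inr (le_antisymm (hx i).2 (h i hp))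
      · exact Or.inl hz.symm
    set S := Finset.univ.filter (fun i => x i = 1) with hS
    have hsum : ∑ i, x i = (S.card : ℝ) := by
      rw [hS, Finset.card_filter]
      push_cast
      apply Finset.sum_congr rfl
      intro i _
      rcases h01 i with h' | h' <;> simp [h']
    rw [hsum] at h1 h2
    have hlt : S.card < k := by exact_mod_cast h2
    have hgt : (k : ℝ) < S.card + 1 := by linarith
    have : k < S.card + 1 := by exact_mod_cast hgt
    omega
end

section
/- Let π ∈ ℤ³ with 0 ≤ π₁ ≤ π₂ ≤ π₃ and η ∈ ℤ with π₃ ≤ η and π₁ + π₂ ≥ η + 1. Then {x ∈ [0,1]³ : η < πᵀx < η + 1} ⊆ {x ∈ [0,1]³ : 1 < x₁ + x₂ + x₃ < 2}. -/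
theorem stmt_13 (π₁ π₂ π₃ η : ℤ) (h0 : 0 ≤ π₁) (h12 : π₁ ≤ π₂) (h23 : π₂ ≤ π₃)
    (h3 : π₃ ≤ η) (h12η : η + 1 ≤ π₁ + π₂) :
    ∀ x₁ x₂ x₃ : ℝ, 0 ≤ x₁ → x₁ ≤ 1 → 0 ≤ x₂ → x₂ ≤ 1 → 0 ≤ x₃ → x₃ ≤ 1 →
      (η : ℝ) < π₁ * x₁ + π₂ * x₂ + π₃ * x₃ →
      π₁ * x₁ + π₂ * x₂ + π₃ * x₃ < (η : ℝ) + 1 →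
      1 < x₁ + x₂ + x₃ ∧ x₁ + x₂ + x₃ < 2 := by
  intro x₁ x₂ x₃ hx1 hx1' hx2 hx2' hx3 hx3' hlo hhi
  have h0' : (0:ℝ) ≤ π₁ := by exact_mod_cast h0
  have h12' : (π₁:ℝ) ≤ π₂ := by exact_mod_cast h12
  have h23' : (π₂:ℝ) ≤ π₃ := by exact_mod_cast h23
  have h3' : (π₃:ℝ) ≤ η := by exact_mod_cast h3
  have h12η' : (η:ℝ) + 1 ≤ π₁ + π₂ := by exact_mod_cast h12η
  constructor
  · by_contra h
    push_neg at h
    nlinarith [mul_nonneg (h0'.trans (h12'.trans h23')) (sub_nonneg.2 h),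
      mul_nonneg (sub_nonneg.2 h12') hx2, mul_nonneg (sub_nonneg.2 h23') hx3,
      mul_nonneg (sub_nonneg.2 (h12'.trans h23')) hx1]
  · by_contra h
    push_neg at h
    nlinarith [mul_nonneg (h0'.trans h12') (by linarith : (0:ℝ) ≤ x₁ + x₂ + x₃ - 2),
      mul_nonneg (sub_nonneg.2 h12') (sub_nonneg.2 hx1'),
      mul_nonneg (sub_nonneg.2 h23') hx3]
end

section
/- Let π ∈ ℤ⁴ with 0 ≤ π₁ ≤ π₂ ≤ π₃ ≤ π₄ and η ∈ ℤ with π₄ ≤ η and π₁ + π₂ ≥ η + 1. Then {x ∈ [0,1]⁴ : η < πᵀx < η + 1} ⊆ {x ∈ [0,1]⁴ : 1 < x₁ + x₂ + x₃ + x₄ < 2}. -/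
theorem stmt_15 (π₁ π₂ π₃ π₄ η : ℤ) (h0 : 0 ≤ π₁) (h12 : π₁ ≤ π₂) (h23 : π₂ ≤ π₃)
    (h34 : π₃ ≤ π₄) (h4 : π₄ ≤ η) (h12η : η + 1 ≤ π₁ + π₂) :
    ∀ x₁ x₂ x₃ x₄ : ℝ, 0 ≤ x₁ → x₁ ≤ 1 → 0 ≤ x₂ → x₂ ≤ 1 → 0 ≤ x₃ → x₃ ≤ 1 →
      0 ≤ x₄ → x₄ ≤ 1 →
      (η : ℝ) < π₁ * x₁ + π₂ * x₂ + π₃ * x₃ + π₄ * x₄ →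
      π₁ * x₁ + π₂ * x₂ + π₃ * x₃ + π₄ * x₄ < (η : ℝ) + 1 →
      1 < x₁ + x₂ + x₃ + x₄ ∧ x₁ + x₂ + x₃ + x₄ < 2 := by
  intro x₁ x₂ x₃ x₄ hx1 hx1' hx2 hx2' hx3 hx3' hx4 hx4' hlo hhi
  have hη : (1:ℝ) ≤ η := by exact_mod_cast (by omega : (1:ℤ) ≤ η)
  have h1 : (π₁:ℝ) ≤ η := by exact_mod_cast (by omega : π₁ ≤ η)
  have h2 : (π₂:ℝ) ≤ η := by exact_mod_cast (by omega : π₂ ≤ η)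
  have h3 : (π₃:ℝ) ≤ η := by exact_mod_cast (by omega : π₃ ≤ η)
  have h4' : (π₄:ℝ) ≤ η := by exact_mod_cast h4
  have h0' : (0:ℝ) ≤ π₁ := by exact_mod_cast h0
  have h12' : (π₁:ℝ) ≤ π₂ := by exact_mod_cast h12
  have h23' : (π₂:ℝ) ≤ π₃ := by exact_mod_cast h23
  have h34' : (π₃:ℝ) ≤ π₄ := by exact_mod_cast h34
  have hs : (η:ℝ) + 1 ≤ π₁ + π₂ := by exact_mod_cast h12η
  constructor
  · nlinarith [mul_nonneg (sub_nonneg.2 h1) hx1, mul_nonneg (sub_nonneg.2 h2) hx2,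
      mul_nonneg (sub_nonneg.2 h3) hx3, mul_nonneg (sub_nonneg.2 h4') hx4]
  · by_contra hc
    push_neg at hc
    nlinarith [mul_nonneg (sub_nonneg.2 h12') (sub_nonneg.2 hx1'),
      mul_nonneg (sub_nonneg.2 h23') hx3, mul_nonneg (sub_nonneg.2 h34') hx4,
      mul_nonneg (le_trans h0' h12') (by linarith : (0:ℝ) ≤ x₁ + x₂ + x₃ + x₄ - 2)]
end

section
/- Let π ∈ ℤ⁴ with 0 ≤ π₁ ≤ π₂ ≤ π₃ ≤ π₄ and η ∈ ℤ with π₃ + π₄ ≤ η and π₁ + π₂ + π₃ ≥ η + 1. Then {x ∈ [0,1]⁴ : η < πᵀx < η + 1} ⊆ {x ∈ [0,1]⁴ : 2 < x₁ + x₂ + x₃ + x₄ < 3}. -/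
theorem stmt_16 (π₁ π₂ π₃ π₄ η : ℤ) (h0 : 0 ≤ π₁) (h12 : π₁ ≤ π₂) (h23 : π₂ ≤ π₃)
    (h34 : π₃ ≤ π₄) (h34η : π₃ + π₄ ≤ η) (h123 : η + 1 ≤ π₁ + π₂ + π₃) :
    ∀ x₁ x₂ x₃ x₄ : ℝ, 0 ≤ x₁ → x₁ ≤ 1 → 0 ≤ x₂ → x₂ ≤ 1 → 0 ≤ x₃ → x₃ ≤ 1 →
      0 ≤ x₄ → x₄ ≤ 1 →
      (η : ℝ) < π₁ * x₁ + π₂ * x₂ + π₃ * x₃ + π₄ * x₄ →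
      π₁ * x₁ + π₂ * x₂ + π₃ * x₃ + π₄ * x₄ < (η : ℝ) + 1 →
      2 < x₁ + x₂ + x₃ + x₄ ∧ x₁ + x₂ + x₃ + x₄ < 3 := by
  intro x₁ x₂ x₃ x₄ hx1 hx1' hx2 hx2' hx3 hx3' hx4 hx4' hlo hhi
  have H0 : (0:ℝ) ≤ (π₁:ℝ) := by exact_mod_cast h0
  have H12 : (π₁:ℝ) ≤ π₂ := by exact_mod_cast h12
  have H23 : (π₂:ℝ) ≤ π₃ := by exact_mod_cast h23
  have H34 : (π₃:ℝ) ≤ π₄ := by exact_mod_cast h34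
  have H34η : (π₃:ℝ) + π₄ ≤ η := by exact_mod_cast h34η
  have H123 : (η:ℝ) + 1 ≤ π₁ + π₂ + π₃ := by exact_mod_cast h123
  constructor
  · by_contra h
    push_neg at h
    nlinarith [mul_nonneg (sub_nonneg.2 (H12.trans H23)) hx1,
      mul_nonneg (sub_nonneg.2 H23) hx2,
      mul_nonneg (sub_nonneg.2 H34) (sub_nonneg.2 hx4'),
      mul_nonneg (H0.trans (H12.trans H23)) (sub_nonneg.2 h)]
  · by_contra h
    push_neg at h
    nlinarith [mul_nonneg (sub_nonneg.2 (H12.trans H23)) (sub_nonneg.2 hx1'),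
      mul_nonneg (sub_nonneg.2 H23) (sub_nonneg.2 hx2'),
      mul_nonneg (sub_nonneg.2 H34) hx4,
      mul_nonneg (H0.trans (H12.trans H23)) (by linarith : (0:ℝ) ≤ x₁ + x₂ + x₃ + x₄ - 3)]
end

section
/- Let π ∈ ℤ⁴ with 0 ≤ π₁ ≤ π₂ ≤ π₃ ≤ π₄ and η ∈ ℤ satisfy π₄ ≤ η, π₁ + π₂ ≤ η, and π₁ + π₃ ≥ η + 1. Then {x ∈ [0,1]⁴ : η < πᵀx < η + 1} is contained in the union of {x ∈ [0,1]⁴ : 1 < x₁ + x₂ + x₃ + x₄ < 2} and {x ∈ [0,1]⁴ : 0 < x₃ + x₄ < 1}. -/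
theorem stmt_17 (π₁ π₂ π₃ π₄ η : ℤ) (h0 : 0 ≤ π₁) (h12 : π₁ ≤ π₂) (h23 : π₂ ≤ π₃)
    (h34 : π₃ ≤ π₄) (h4 : π₄ ≤ η) (h12η : π₁ + π₂ ≤ η) (h13 : η + 1 ≤ π₁ + π₃) :
    ∀ x₁ x₂ x₃ x₄ : ℝ, 0 ≤ x₁ → x₁ ≤ 1 → 0 ≤ x₂ → x₂ ≤ 1 → 0 ≤ x₃ → x₃ ≤ 1 →
      0 ≤ x₄ → x₄ ≤ 1 →
      (η : ℝ) < π₁ * x₁ + π₂ * x₂ + π₃ * x₃ + π₄ * x₄ →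
      π₁ * x₁ + π₂ * x₂ + π₃ * x₃ + π₄ * x₄ < (η : ℝ) + 1 →
      ((1 < x₁ + x₂ + x₃ + x₄ ∧ x₁ + x₂ + x₃ + x₄ < 2) ∨
        (0 < x₃ + x₄ ∧ x₃ + x₄ < 1)) := by
  intro x₁ x₂ x₃ x₄ hx1 hx1' hx2 hx2' hx3 hx3' hx4 hx4' hlo hhi
  have c0 : (0:ℝ) ≤ (π₁:ℝ) := by exact_mod_cast h0
  have c12 : (π₁:ℝ) ≤ π₂ := by exact_mod_cast h12
  have c23 : (π₂:ℝ) ≤ π₃ := by exact_mod_cast h23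
  have c34 : (π₃:ℝ) ≤ π₄ := by exact_mod_cast h34
  have c4 : (π₄:ℝ) ≤ η := by exact_mod_cast h4
  have c12η : (π₁:ℝ) + π₂ ≤ η := by exact_mod_cast h12η
  have c13 : (η:ℝ) + 1 ≤ π₁ + π₃ := by exact_mod_cast h13
  rcases le_or_gt (x₃ + x₄) 0 with ht | ht
  · -- x₃ = x₄ = 0, contradiction with lower bound
    exfalso
    have h3 : x₃ = 0 := by linarith
    have h4' : x₄ = 0 := by linarith
    subst h3; subst h4'
    nlinarith [mul_nonneg (sub_nonneg.2 c12) hx2, mul_nonneg c0 (sub_nonneg.2 hx1'),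
      mul_nonneg (sub_nonneg.2 c12) (sub_nonneg.2 hx2'),
      mul_nonneg (by linarith : (0:ℝ) ≤ (π₂:ℝ)) (sub_nonneg.2 hx2')]
  rcases lt_or_ge (x₃ + x₄) 1 with ht1 | ht1
  · exact Or.inr ⟨ht, ht1⟩
  left
  constructor
  · -- 1 < sum
    by_contra h
    push_neg at h
    have h1 : x₁ = 0 := by linarith
    have h2 : x₂ = 0 := by linarith
    have ht' : x₃ + x₄ = 1 := by linarith
    subst h1; subst h2
    nlinarith [mul_nonneg (sub_nonneg.2 c34) hx3]
  · -- sum < 2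
    by_contra h
    push_neg at h
    nlinarith [mul_nonneg (sub_nonneg.2 c12) hx2, mul_nonneg (sub_nonneg.2 c34) hx4,
      mul_nonneg c0 (by linarith : (0:ℝ) ≤ x₁ + x₂ + (x₃ + x₄) - 2),
      mul_nonneg (by linarith : (0:ℝ) ≤ (π₃:ℝ) - π₁) (by linarith : (0:ℝ) ≤ x₃ + x₄ - 1)]
end

section
/- Let π ∈ ℤ⁴ with 0 ≤ π₁ ≤ π₂ ≤ π₃ ≤ π₄ and η ∈ ℤ satisfy π₂ + π₄ ≤ η, π₁ + π₂ + π₃ ≥ η + 1, and π₃ + π₄ ≥ η + 1. Then {x ∈ [0,1]⁴ : η < πᵀx < η + 1} is contained in the union of {x ∈ [0,1]⁴ : 2 < x₁ + x₂ + x₃ + x₄ < 3} and {x ∈ [0,1]⁴ : 1 < x₃ + x₄ < 2}. -/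
theorem stmt_18 (π₁ π₂ π₃ π₄ η : ℤ) (h0 : 0 ≤ π₁) (h12 : π₁ ≤ π₂) (h23 : π₂ ≤ π₃)
    (h34 : π₃ ≤ π₄) (h24 : π₂ + π₄ ≤ η) (h123 : η + 1 ≤ π₁ + π₂ + π₃)
    (h34η : η + 1 ≤ π₃ + π₄) :
    ∀ x₁ x₂ x₃ x₄ : ℝ, 0 ≤ x₁ → x₁ ≤ 1 → 0 ≤ x₂ → x₂ ≤ 1 → 0 ≤ x₃ → x₃ ≤ 1 →
      0 ≤ x₄ → x₄ ≤ 1 →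
      (η : ℝ) < π₁ * x₁ + π₂ * x₂ + π₃ * x₃ + π₄ * x₄ →
      π₁ * x₁ + π₂ * x₂ + π₃ * x₃ + π₄ * x₄ < (η : ℝ) + 1 →
      ((2 < x₁ + x₂ + x₃ + x₄ ∧ x₁ + x₂ + x₃ + x₄ < 3) ∨
        (1 < x₃ + x₄ ∧ x₃ + x₄ < 2)) := by
  intro x₁ x₂ x₃ x₄ hx1 hx1' hx2 hx2' hx3 hx3' hx4 hx4' hlo hhi
  have h0' : (0:ℝ) ≤ π₁ := by exact_mod_cast h0
  have h12' : (π₁:ℝ) ≤ π₂ := by exact_mod_cast h12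
  have h23' : (π₂:ℝ) ≤ π₃ := by exact_mod_cast h23
  have h34' : (π₃:ℝ) ≤ π₄ := by exact_mod_cast h34
  have h24' : (π₂:ℝ) + π₄ ≤ η := by exact_mod_cast h24
  have h123' : (η:ℝ) + 1 ≤ π₁ + π₂ + π₃ := by exact_mod_cast h123
  have h34η' : (η:ℝ) + 1 ≤ π₃ + π₄ := by exact_mod_cast h34η
  by_contra hc
  push_neg at hc
  obtain ⟨hs, ht⟩ := hc
  rcases le_or_gt (x₃ + x₄) 1 with ht1 | ht1
  · rcases le_or_gt (x₁ + x₂ + x₃ + x₄) 2 with hs1 | hs1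
    · -- πx ≤ π₂ + π₄ ≤ η, contradiction with hlo
      nlinarith [mul_nonneg (sub_nonneg.2 h12') hx1, mul_nonneg (sub_nonneg.2 h34') hx3,
        mul_nonneg (sub_nonneg.2 (h12'.trans h23')) (sub_nonneg.2 ht1),
        mul_nonneg (h0'.trans h12') (by linarith : (0:ℝ) ≤ 2 - (x₁ + x₂ + x₃ + x₄)),
        mul_nonneg (sub_nonneg.2 (h23'.trans h34')) (sub_nonneg.2 ht1)]
    · -- s ≥ 3 forced, x₁ = x₂ = 1, t = 1
      have hs3 := hs hs1
      have hx11 : x₁ = 1 := by linarith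
      have hx21 : x₂ = 1 := by linarith
      have ht' : x₃ + x₄ = 1 := by linarith
      subst hx11 hx21
      nlinarith [mul_nonneg (sub_nonneg.2 h34') hx4]
  · -- t ≥ 2 forced, x₃ = x₄ = 1
    have ht2 := ht ht1
    have hx31 : x₃ = 1 := by linarith
    have hx41 : x₄ = 1 := by linarith
    subst hx31 hx41
    nlinarith [mul_nonneg h0' hx1, mul_nonneg (h0'.trans h12') hx2]
end
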